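/- Weak theorem of Mordell–Weil for Pell conics: the quotient group C(ℤ)/2C(ℤ) is finite. -/
import Mathlib


open Filter Real

/-- The defining equation of the Pell conic `X² - ΔY² = 4`. -/
def PellSol (Δ : ℚ) (P : ℚ × ℚ) : Prop := P.1 ^ 2 - Δ * P.2 ^ 2 = 4

/-- The rational points on the Pell conic `X² - ΔY² = 4`. -/
def Conic (Δ : ℚ) : Type := {P : ℚ × ℚ // PellSol Δ P}

namespace Conic

variable {Δ : ℚ}

/-- Addition on the Pell conic. -/
instance : Add (Conic Δ) :=
  ⟨fun P Q => ⟨((P.val.1 * Q.val.1 + Δ * P.val.2 * Q.val.2) / 2,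
    (P.val.1 * Q.val.2 + P.val.2 * Q.val.1) / 2), by
      have hP := P.property
      have hQ := Q.property
      unfold PellSol at *
      dsimp only
      linear_combination ((Q.val.1 ^ 2 - Δ * Q.val.2 ^ 2) / 4) * hP + hQ⟩⟩

/-- The neutral element `(2,0)` of the Pell conic. -/
instance : Zero (Conic Δ) := ⟨⟨(2, 0), by unfold PellSol; norm_num⟩⟩

/-- The negative of a point on the Pell conic. -/
instance : Neg (Conic Δ) :=
  ⟨fun P => ⟨(P.val.1, -P.val.2), by
    have hP := P.property
    unfold PellSol at *
    dsimp only
    linear_combination hP⟩⟩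

@[simp] lemma add_val (P Q : Conic Δ) :
    (P + Q).val = ((P.val.1 * Q.val.1 + Δ * P.val.2 * Q.val.2) / 2,
      (P.val.1 * Q.val.2 + P.val.2 * Q.val.1) / 2) := rfl

@[simp] lemma zero_val : ((0 : Conic Δ)).val = (2, 0) := rfl

@[simp] lemma neg_val (P : Conic Δ) : (-P).val = (P.val.1, -P.val.2) := rfl

protected lemma add_assoc' (P Q R : Conic Δ) : P + Q + R = P + (Q + R) := by
  apply Subtype.ext
  rw [Prod.ext_iff, add_val, add_val, add_val, add_val]
  constructor <;> (dsimp only; ring)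

protected lemma zero_add' (P : Conic Δ) : 0 + P = P := by
  apply Subtype.ext
  rw [Prod.ext_iff, add_val, zero_val]
  constructor <;> (dsimp only; ring)

protected lemma add_zero' (P : Conic Δ) : P + 0 = P := by
  apply Subtype.ext
  rw [Prod.ext_iff, add_val, zero_val]
  constructor <;> (dsimp only; ring)

protected lemma neg_add_cancel' (P : Conic Δ) : -P + P = 0 := by
  have hP := P.property
  unfold PellSol at hP
  apply Subtype.ext
  rw [Prod.ext_iff, add_val, neg_val, zero_val]
  constructor
  · dsimp only
    linear_combination hP / 2
  · dsimp only; ring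

protected lemma add_comm' (P Q : Conic Δ) : P + Q = Q + P := by
  apply Subtype.ext
  rw [Prod.ext_iff, add_val, add_val]
  constructor <;> (dsimp only; ring)

/-- The group structure on the rational points of the Pell conic. -/
instance : AddCommGroup (Conic Δ) where
  add := (· + ·)
  zero := 0
  neg := Neg.neg
  nsmul := nsmulRec
  zsmul := zsmulRec
  add_assoc := Conic.add_assoc'
  zero_add := Conic.zero_add'
  add_zero := Conic.add_zero'
  neg_add_cancel := Conic.neg_add_cancel'
  add_comm := Conic.add_comm'

end Conic
section Extra

namespace Conic

variable {Δ : ℚ}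

/-- The naive height of a point on a Pell conic: `H(x,y) = max(|num x|, den x)`. -/
noncomputable def height (P : Conic Δ) : ℝ :=
  max (|P.val.1.num| : ℝ) (P.val.1.den : ℝ)

/-- The logarithmic height `h₀(P) = log H(P)`. -/
noncomputable def logHeight (P : Conic Δ) : ℝ := Real.log (height P)

/-- The canonical height `h(P) = lim 2⁻ⁿ h₀(2ⁿ P)`. -/
noncomputable def canHeight (P : Conic Δ) : ℝ :=
  limUnder atTop (fun n : ℕ => logHeight ((2 ^ n) • P) / 2 ^ n)

end Conic

/-- The integral points form a subgroup of the group of rational points on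
the Pell conic `X² - ΔY² = 4` (for an integral `Δ`). -/
def intPoints (Δ : ℤ) : AddSubgroup (Conic (Δ : ℚ)) where
  carrier := {P | ∃ a b : ℤ, P.val = ((a : ℚ), (b : ℚ))}
  zero_mem' := ⟨2, 0, by rw [Conic.zero_val]; norm_num⟩
  neg_mem' := by
    rintro P ⟨a, b, h⟩
    exact ⟨a, -b, by rw [Conic.neg_val, h]; push_cast; rfl⟩
  add_mem' := by
    rintro P Q ⟨a, b, hP⟩ ⟨c, e, hQ⟩
    have hPp := P.property
    have hQp := Q.property
    unfold PellSol at hPp hQp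
    rw [hP] at hPp
    rw [hQ] at hQp
    dsimp only at hPp hQp
    have ha : a ^ 2 - Δ * b ^ 2 = 4 := by exact_mod_cast hPp
    have hc : c ^ 2 - Δ * e ^ 2 = 4 := by exact_mod_cast hQp
    have key : ∀ A B C E F : ZMod 2, A ^ 2 - F * B ^ 2 = 4 → C ^ 2 - F * E ^ 2 = 4 →
        (A * C + F * B * E = 0 ∧ A * E + B * C = 0) := by decide
    have ha2 : (a : ZMod 2) ^ 2 - (Δ : ZMod 2) * (b : ZMod 2) ^ 2 = 4 := by
      have := congrArg (fun z : ℤ => (z : ZMod 2)) ha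
      push_cast at this
      exact_mod_cast this
    have hc2 : (c : ZMod 2) ^ 2 - (Δ : ZMod 2) * (e : ZMod 2) ^ 2 = 4 := by
      have := congrArg (fun z : ℤ => (z : ZMod 2)) hc
      push_cast at this
      exact_mod_cast this
    obtain ⟨k1, k2⟩ := key (a : ZMod 2) (b : ZMod 2) (c : ZMod 2) (e : ZMod 2) (Δ : ZMod 2) ha2 hc2
    have d1 : (2 : ℤ) ∣ (a * c + Δ * b * e) := by
      have : ((a * c + Δ * b * e : ℤ) : ZMod 2) = 0 := by push_cast; linear_combination k1
      exact_mod_cast (ZMod.intCast_zmod_eq_zero_iff_dvd _ 2).mp this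
    have d2 : (2 : ℤ) ∣ (a * e + b * c) := by
      have : ((a * e + b * c : ℤ) : ZMod 2) = 0 := by push_cast; linear_combination k2
      exact_mod_cast (ZMod.intCast_zmod_eq_zero_iff_dvd _ 2).mp this
    obtain ⟨X, hX⟩ := d1
    obtain ⟨Y, hY⟩ := d2
    refine ⟨X, Y, ?_⟩
    rw [Conic.add_val, hP, hQ]
    have hX' : ((a : ℚ) * c + Δ * b * e) = 2 * X := by exact_mod_cast congrArg (fun z : ℤ => (z : ℚ)) hX
    have hY' : ((a : ℚ) * e + b * c) = 2 * Y := by exact_mod_cast congrArg (fun z : ℤ => (z : ℚ)) hY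
    rw [Prod.ext_iff]
    constructor
    · dsimp only
      rw [div_eq_iff (by norm_num : (2:ℚ) ≠ 0)]
      linarith [hX']
    · dsimp only
      rw [div_eq_iff (by norm_num : (2:ℚ) ≠ 0)]
      linarith [hY']

end Extra


section WMWAux

open Real

/-- The real embedding `(x,y) ↦ (x + y√Δ)/2` of a conic point. -/
noncomputable def ceps (Δ : ℤ) (P : Conic (Δ : ℚ)) : ℝ :=
  ((P.val.1 : ℝ) + (P.val.2 : ℝ) * Real.sqrt (Δ : ℝ)) / 2

/-- The conjugate embedding `(x,y) ↦ (x - y√Δ)/2`. -/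
noncomputable def cepsb (Δ : ℤ) (P : Conic (Δ : ℚ)) : ℝ :=
  ((P.val.1 : ℝ) - (P.val.2 : ℝ) * Real.sqrt (Δ : ℝ)) / 2

lemma pell_real {Δ : ℤ} (P : Conic (Δ : ℚ)) :
    (P.val.1 : ℝ) ^ 2 - (Δ : ℝ) * (P.val.2 : ℝ) ^ 2 = 4 := by
  have h := P.property
  unfold PellSol at h
  exact_mod_cast congrArg (fun q : ℚ => (q : ℝ)) h

lemma ceps_mul_cepsb {Δ : ℤ} (hΔ : 0 ≤ Δ) (P : Conic (Δ : ℚ)) :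
    ceps Δ P * cepsb Δ P = 1 := by
  have h := pell_real P
  have hs : Real.sqrt (Δ : ℝ) ^ 2 = (Δ : ℝ) := Real.sq_sqrt (by exact_mod_cast hΔ)
  unfold ceps cepsb
  linear_combination h / 4 - ((P.val.2 : ℝ) ^ 2 / 4) * hs

lemma ceps_ne_zero {Δ : ℤ} (hΔ : 0 ≤ Δ) (P : Conic (Δ : ℚ)) : ceps Δ P ≠ 0 :=
  left_ne_zero_of_mul_eq_one (ceps_mul_cepsb hΔ P)

lemma ceps_add {Δ : ℤ} (hΔ : 0 ≤ Δ) (P Q : Conic (Δ : ℚ)) :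
    ceps Δ (P + Q) = ceps Δ P * ceps Δ Q := by
  have hs : Real.sqrt (Δ : ℝ) ^ 2 = (Δ : ℝ) := Real.sq_sqrt (by exact_mod_cast hΔ)
  unfold ceps
  rw [Conic.add_val]
  dsimp only
  push_cast
  linear_combination (-((P.val.2 : ℝ) * (Q.val.2 : ℝ)) / 4) * hs

lemma ceps_add_cepsb {Δ : ℤ} (P : Conic (Δ : ℚ)) :
    ceps Δ P + cepsb Δ P = (P.val.1 : ℝ) := by
  unfold ceps cepsb; ring

lemma ceps_sub_cepsb {Δ : ℤ} (P : Conic (Δ : ℚ)) :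
    ceps Δ P - cepsb Δ P = (P.val.2 : ℝ) * Real.sqrt (Δ : ℝ) := by
  unfold ceps cepsb; ring

/-- The logarithmic embedding of the group of integral points. -/
noncomputable def ellHom (Δ : ℤ) (hΔ : 0 ≤ Δ) : ↥(intPoints Δ) →+ ℝ :=
  AddMonoidHom.mk' (fun P => Real.log (ceps Δ P.val))
    (fun P Q => by
      show Real.log (ceps Δ ((P : Conic (Δ : ℚ)) + (Q : Conic (Δ : ℚ)))) = _
      rw [ceps_add hΔ, Real.log_mul (ceps_ne_zero hΔ _) (ceps_ne_zero hΔ _)])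

lemma ellHom_apply {Δ : ℤ} (hΔ : 0 ≤ Δ) (P : ↥(intPoints Δ)) :
    ellHom Δ hΔ P = Real.log (ceps Δ P.val) := rfl

/-- Integral points with bounded coordinates form a finite set. -/
lemma finite_bounded (Δ : ℤ) (c1 c2 : ℤ) :
    {P : ↥(intPoints Δ) | |P.val.val.1| ≤ (c1 : ℚ) ∧ |P.val.val.2| ≤ (c2 : ℚ)}.Finite := by
  have hinj : Function.Injective (fun P : ↥(intPoints Δ) => P.val.val) := by
    intro P Q h
    exact Subtype.ext (Subtype.ext h)
  have hfin : (↑((Finset.Icc (-c1) c1 ×ˢ Finset.Icc (-c2) c2).image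
      (fun p : ℤ × ℤ => ((p.1 : ℚ), (p.2 : ℚ)))) : Set (ℚ × ℚ)).Finite :=
    Finset.finite_toSet _
  refine Set.Finite.subset (hfin.preimage hinj.injOn) ?_
  rintro P ⟨h1, h2⟩
  obtain ⟨a, b, hab⟩ := P.property
  simp only [Set.mem_preimage, Finset.coe_image, Set.mem_image, Finset.mem_coe,
    Finset.mem_product, Finset.mem_Icc]
  rw [hab] at h1 h2 ⊢
  dsimp only at h1 h2
  have ha : -c1 ≤ a ∧ a ≤ c1 := by
    have := abs_le.mp h1
    constructor
    · exact_mod_cast this.1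
    · exact_mod_cast this.2
  have hb : -c2 ≤ b ∧ b ≤ c2 := by
    have := abs_le.mp h2
    constructor
    · exact_mod_cast this.1
    · exact_mod_cast this.2
  exact ⟨(a, b), ⟨⟨ha.1, ha.2⟩, ⟨hb.1, hb.2⟩⟩, rfl⟩

/-- Points whose embedding has absolute value in `[1,2]` have small coordinates. -/
lemma coords_bounded {Δ : ℤ} (hΔ5 : 5 ≤ Δ) (P : ↥(intPoints Δ))
    (h1 : 1 ≤ |ceps Δ P.val|) (h2 : |ceps Δ P.val| ≤ 2) :
    |P.val.val.1| ≤ (3 : ℚ) ∧ |P.val.val.2| ≤ (1 : ℚ) := by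
  have hΔ0 : (0 : ℤ) ≤ Δ := by omega
  set e := ceps Δ P.val with he
  set f := cepsb Δ P.val with hf
  have hef : e * f = 1 := ceps_mul_cepsb hΔ0 P.val
  have hene : e ≠ 0 := ceps_ne_zero hΔ0 P.val
  have hfabs : |f| ≤ 1 := by
    have : |e| * |f| = 1 := by rw [← abs_mul, hef, abs_one]
    nlinarith [abs_nonneg f]
  have hx : e + f = (P.val.val.1 : ℝ) := ceps_add_cepsb P.val
  have hy : e - f = (P.val.val.2 : ℝ) * Real.sqrt (Δ : ℝ) := ceps_sub_cepsb P.val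
  obtain ⟨a, b, hab⟩ := P.property
  rw [hab]
  rw [hab] at hx hy
  dsimp only at hx hy ⊢
  push_cast at hx hy
  have hxb : |(a : ℝ)| ≤ 3 := by
    rw [← hx]
    calc |e + f| ≤ |e| + |f| := abs_add_le _ _
    _ ≤ 3 := by linarith
  have hyb : |(b : ℝ)| * Real.sqrt (Δ : ℝ) ≤ 3 := by
    have hs0 : (0 : ℝ) ≤ Real.sqrt (Δ : ℝ) := Real.sqrt_nonneg _
    have : |(b : ℝ) * Real.sqrt (Δ : ℝ)| ≤ 3 := by
      rw [← hy]
      calc |e - f| ≤ |e| + |f| := abs_sub _ _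
      _ ≤ 3 := by linarith
    rwa [abs_mul, abs_of_nonneg hs0] at this
  have hs : Real.sqrt (Δ : ℝ) ^ 2 = (Δ : ℝ) := Real.sq_sqrt (by exact_mod_cast hΔ0)
  have hsn : (0 : ℝ) ≤ Real.sqrt (Δ : ℝ) := Real.sqrt_nonneg _
  have habn : (0 : ℝ) ≤ |(b : ℝ)| := abs_nonneg _
  have h9 : (|(b : ℝ)| * Real.sqrt (Δ : ℝ)) ^ 2 ≤ 9 := by
    have hmul := mul_le_mul hyb hyb (mul_nonneg habn hsn) (by norm_num : (0 : ℝ) ≤ 3)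
    nlinarith [hmul]
  have hb2 : (b : ℝ) ^ 2 * (Δ : ℝ) ≤ 9 := by
    rw [mul_pow, sq_abs, hs] at h9; exact h9
  have hb2' : b ^ 2 * Δ ≤ 9 := by exact_mod_cast hb2
  have hbZ : |b| ≤ 1 := by nlinarith [sq_nonneg b, sq_abs b]
  have haZ : |a| ≤ 3 := by
    have h1 : (a : ℝ) ≤ 3 := (abs_le.mp hxb).2
    have h2 : (-3 : ℝ) ≤ a := (abs_le.mp hxb).1
    have h1' : a ≤ 3 := by exact_mod_cast h1
    have h2' : -3 ≤ a := by exact_mod_cast h2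
    rw [abs_le]; omega
  constructor
  · rw [abs_le] at haZ ⊢
    constructor <;> [exact_mod_cast haZ.1; exact_mod_cast haZ.2]
  · rw [abs_le] at hbZ ⊢
    constructor <;> [exact_mod_cast hbZ.1; exact_mod_cast hbZ.2]

/-- The group of integral points is finitely generated when `Δ ≥ 5`. -/
lemma intPoints_fg {Δ : ℤ} (hΔ5 : 5 ≤ Δ) : AddGroup.FG ↥(intPoints Δ) := by
  have hΔ0 : (0 : ℤ) ≤ Δ := by omega
  set ℓ := ellHom Δ hΔ0 with hℓ
  -- the kernel of ℓ is finite
  have hker : {P : ↥(intPoints Δ) | ℓ P = 0}.Finite := by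
    refine Set.Finite.subset (finite_bounded Δ 3 1) ?_
    intro P hP
    have h0 : Real.log (ceps Δ P.val) = 0 := hP
    have hene : ceps Δ P.val ≠ 0 := ceps_ne_zero hΔ0 P.val
    have habs : |ceps Δ P.val| = 1 := by
      rcases Real.log_eq_zero.mp h0 with h | h | h
      · exact absurd h hene
      · rw [h]; norm_num
      · rw [h]; norm_num
    exact coords_bounded hΔ5 P (le_of_eq habs.symm) (by rw [habs]; norm_num)
  -- the range of ℓ is not dense
  have hnotdense : ¬ Dense ((ℓ.range : AddSubgroup ℝ) : Set ℝ) := by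
    intro hdense
    set V : Set ℝ := (fun P => ℓ P) '' {P : ↥(intPoints Δ) |
        |P.val.val.1| ≤ (3 : ℚ) ∧ |P.val.val.2| ≤ (1 : ℚ)} with hV
    have hVfin : V.Finite := Set.Finite.image _ (finite_bounded Δ 3 1)
    have hlog2 : (0 : ℝ) < Real.log 2 := Real.log_pos (by norm_num)
    have hUopen : IsOpen (Set.Ioo 0 (Real.log 2) \ V) :=
      IsOpen.sdiff isOpen_Ioo hVfin.isClosed
    have hUne : (Set.Ioo 0 (Real.log 2) \ V).Nonempty :=
      ((Set.Ioo_infinite hlog2).diff hVfin).nonempty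
    obtain ⟨s, hsS, hsU⟩ := hdense.exists_mem_open hUopen hUne
    obtain ⟨P, hP⟩ := hsS
    have hsIoo : s ∈ Set.Ioo 0 (Real.log 2) := hsU.1
    have hene : ceps Δ P.val ≠ 0 := ceps_ne_zero hΔ0 P.val
    have habs0 : (0 : ℝ) < |ceps Δ P.val| := abs_pos.mpr hene
    have hlogabs : Real.log |ceps Δ P.val| = s := by
      rw [Real.log_abs]; exact hP
    have h1 : 1 ≤ |ceps Δ P.val| := by
      have hxe : |ceps Δ P.val| = Real.exp s := by rw [← hlogabs, Real.exp_log habs0]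
      rw [hxe]
      have : Real.exp 0 ≤ Real.exp s := Real.exp_le_exp.mpr (le_of_lt hsIoo.1)
      simpa using this
    have h2 : |ceps Δ P.val| ≤ 2 := by
      have hle : Real.log |ceps Δ P.val| ≤ Real.log 2 := by
        rw [hlogabs]; exact le_of_lt hsIoo.2
      have := Real.log_le_log_iff habs0 (by norm_num : (0:ℝ) < 2)
      exact this.mp hle
    have hmem := coords_bounded hΔ5 P h1 h2
    exact hsU.2 ⟨P, hmem, hP⟩
  -- hence the range is cyclic
  obtain hd | ⟨a, ha⟩ := AddSubgroup.dense_or_cyclic ℓ.range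
  · exact absurd hd hnotdense
  -- use the linear-algebra FG criterion
  rw [← Module.Finite.iff_addGroup_fg, Module.finite_def]
  refine Submodule.fg_of_fg_map_of_fg_inf_ker ℓ.toIntLinearMap ?_ ?_
  · -- image is cyclic, hence FG
    refine ⟨{a}, ?_⟩
    rw [Finset.coe_singleton]
    apply le_antisymm
    · rw [Submodule.span_le]
      intro x hx
      have hxa : x = a := hx
      have hmem : a ∈ ℓ.range := by
        rw [ha]; exact AddSubgroup.mem_closure_singleton.mpr ⟨1, one_zsmul a⟩
      obtain ⟨P, hP⟩ := hmem
      exact ⟨P, Submodule.mem_top, by rw [hxa]; exact hP⟩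
    · rintro x ⟨P, -, hP⟩
      have : x ∈ ℓ.range := ⟨P, hP⟩
      rw [ha] at this
      obtain ⟨n, hn⟩ := AddSubgroup.mem_closure_singleton.mp this
      rw [← hn]
      exact zsmul_mem (Submodule.mem_span_singleton_self a) n
  · -- kernel is finite, hence FG
    have hcar : ((⊤ ⊓ LinearMap.ker ℓ.toIntLinearMap : Submodule ℤ ↥(intPoints Δ)) : Set ↥(intPoints Δ)).Finite := by
      refine Set.Finite.subset hker ?_
      rintro P hP
      exact hP.2
    exact ⟨hcar.toFinset, by rw [Set.Finite.coe_toFinset]; exact Submodule.span_eq _⟩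

/-- The group of integral points is finite when `Δ ≤ -1`. -/
lemma intPoints_finite {Δ : ℤ} (hΔneg : Δ ≤ -1) : Finite ↥(intPoints Δ) := by
  rw [← Set.finite_univ_iff]
  refine Set.Finite.subset (finite_bounded Δ 2 2) ?_
  intro P _
  obtain ⟨a, b, hab⟩ := P.property
  have hprop := P.val.property
  unfold PellSol at hprop
  simp only [Set.mem_setOf_eq]
  rw [hab] at hprop ⊢
  dsimp only at hprop ⊢
  have hZ : a ^ 2 - Δ * b ^ 2 = 4 := by exact_mod_cast hprop
  have hbd : (0 : ℤ) ≤ (-1 - Δ) * b ^ 2 := mul_nonneg (by omega) (sq_nonneg b)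
  have ha : |a| ≤ 2 := by nlinarith [sq_nonneg a, sq_nonneg b, abs_nonneg a, sq_abs a, sq_abs b]
  have hb : |b| ≤ 2 := by nlinarith [sq_nonneg a, sq_nonneg b, abs_nonneg b, sq_abs a, sq_abs b]
  constructor
  · rw [abs_le] at ha ⊢
    constructor <;> [exact_mod_cast ha.1; exact_mod_cast ha.2]
  · rw [abs_le] at hb ⊢
    constructor <;> [exact_mod_cast hb.1; exact_mod_cast hb.2]

end WMWAux

/-- Weak Mordell–Weil for Pell conics: `C(ℤ)/2C(ℤ)` is finite. -/
theorem weak_mordell_weil (d : ℤ) (hsf : Squarefree d) (hd0 : d ≠ 0) (hd1 : d ≠ 1)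
    (Δ : ℤ) (hΔ : Δ = if d % 4 = 1 then d else 4 * d) :
    Finite ((↥(intPoints Δ)) ⧸ (AddMonoidHom.range
      (AddMonoidHom.mk' (fun g : ↥(intPoints Δ) => 2 • g)
        (fun a b => smul_add 2 a b)))) := by
  have hrange : Δ ≤ -1 ∨ 5 ≤ Δ := by
    have h4 : d % 4 = 0 ∨ d % 4 = 1 ∨ d % 4 = 2 ∨ d % 4 = 3 := by omega
    rcases h4 with h | h | h | h <;> rw [hΔ] <;> simp [h] <;> omega
  rcases hrange with hneg | hpos
  · have : Finite ↥(intPoints Δ) := intPoints_finite hneg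
    exact Quotient.finite _
  · have hfg : AddGroup.FG ↥(intPoints Δ) := intPoints_fg hpos
    haveI := hfg
    refine AddCommGroup.finite_of_fg_torsion _ ?_
    intro x
    refine isOfFinAddOrder_iff_nsmul_eq_zero.mpr ⟨2, by norm_num, ?_⟩
    obtain ⟨g, rfl⟩ := QuotientAddGroup.mk'_surjective _ x
    rw [← map_nsmul]
    rw [QuotientAddGroup.mk'_apply, QuotientAddGroup.eq_zero_iff]
    exact ⟨g, by simp [two_nsmul, two_smul]⟩
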